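/- Let S be a real m×n matrix, Σ a symmetric m×m matrix, μ, Y₁,…,Y_L ∈ ℝ^m, W = (1/L)·Σᵢ(Yᵢ−μ)(Yᵢ−μ)ᵀ, M_p = S·diag(p)·Sᵀ + Σ, and Φ(p) = (1/L)·Σᵢ(Yᵢ−μ)ᵀM_p⁻¹(Yᵢ−μ) + log|det M_p|. If p₀ ∈ ℝⁿ is a local minimum of Φ and M_{p₀} is positive definite, then every diagonal entry of the n×n matrix Sᵀ·M_{p₀}⁻¹·(I − W·M_{p₀}⁻¹)·S is zero. -/

import Mathlib

open Matrix

/-- The covariance matrix `M_p = S · diag p · Sᵀ + Σ`. -/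
noncomputable def covMat {m n : ℕ} (S : Matrix (Fin m) (Fin n) ℝ)
    (Sig : Matrix (Fin m) (Fin m) ℝ) (p : Fin n → ℝ) : Matrix (Fin m) (Fin m) ℝ :=
  S * Matrix.diagonal p * Sᵀ + Sig

/-- The negative log-likelihood objective
`Φ(p) = (1/L)·Σᵢ (Yᵢ−μ)ᵀ M_p⁻¹ (Yᵢ−μ) + log|det M_p|`. -/
noncomputable def mlObjective {m n : ℕ} (S : Matrix (Fin m) (Fin n) ℝ)
    (Sig : Matrix (Fin m) (Fin m) ℝ) (L : ℕ) (μ : Fin m → ℝ)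
    (Y : Fin L → Fin m → ℝ) (p : Fin n → ℝ) : ℝ :=
  (1 / (L : ℝ)) * ∑ i, (Y i - μ) ⬝ᵥ ((covMat S Sig p)⁻¹ *ᵥ (Y i - μ)) +
    Real.log |(covMat S Sig p).det|

/-- The empirical covariance `W = (1/L)·Σᵢ (Yᵢ−μ)(Yᵢ−μ)ᵀ`. -/
noncomputable def empCov {m : ℕ} (L : ℕ) (μ : Fin m → ℝ)
    (Y : Fin L → Fin m → ℝ) : Matrix (Fin m) (Fin m) ℝ :=
  (1 / (L : ℝ)) • ∑ i, Matrix.of fun a b => (Y i a - μ a) * (Y i b - μ b)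

/- ### Auxiliary lemmas -/

open Polynomial

section Aux

attribute [local instance] Matrix.linftyOpNormedRing Matrix.linftyOpNormedAlgebra

variable {k m : ℕ}

noncomputable def quadCLM (x : Fin m → ℝ) : Matrix (Fin m) (Fin m) ℝ →L[ℝ] ℝ :=
  LinearMap.toContinuousLinearMap
  { toFun := fun N => x ⬝ᵥ (N *ᵥ x)
    map_add' := fun N N' => by simp [Matrix.add_mulVec, dotProduct_add]
    map_smul' := fun c N => by simp [Matrix.smul_mulVec, dotProduct_smul] }

@[simp] lemma quadCLM_apply (x : Fin m → ℝ) (N : Matrix (Fin m) (Fin m) ℝ) :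
    quadCLM x N = x ⬝ᵥ (N *ᵥ x) := rfl

lemma hasDerivAt_affine (M₀ A : Matrix (Fin m) (Fin m) ℝ) :
    HasDerivAt (fun t : ℝ => M₀ + t • A) A 0 := by
  exact (((hasDerivAt_id (0:ℝ)).smul_const A).const_add M₀).congr_deriv (by simp)

lemma hasDerivAt_inv_path (M₀ A : Matrix (Fin m) (Fin m) ℝ) (hu : IsUnit M₀) :
    HasDerivAt (fun t : ℝ => (M₀ + t • A)⁻¹) (-(M₀⁻¹ * A * M₀⁻¹)) 0 := by
  have h1 : HasFDerivAt Ring.inverse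
      (-(ContinuousLinearMap.mulLeftRight ℝ _ (M₀⁻¹) (M₀⁻¹))) M₀ := by
    have := hasFDerivAt_ringInverse (𝕜 := ℝ) hu.unit
    rwa [Matrix.coe_units_inv, hu.unit_spec] at this
  have h1' : HasFDerivAt Ring.inverse
      (-(ContinuousLinearMap.mulLeftRight ℝ _ (M₀⁻¹) (M₀⁻¹)))
      ((fun t : ℝ => M₀ + t • A) 0) := by simpa using h1
  have h2 := h1'.comp_hasDerivAt 0 (hasDerivAt_affine M₀ A)
  have h3 : (fun t : ℝ => (M₀ + t • A)⁻¹) = Ring.inverse ∘ (fun t : ℝ => M₀ + t • A) := by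
    funext t; simp [Function.comp, Matrix.nonsing_inv_eq_ringInverse]
  rw [h3]
  convert h2 using 1
  all_goals rfl

lemma quad_deriv (M₀ A : Matrix (Fin m) (Fin m) ℝ) (hu : IsUnit M₀) (x : Fin m → ℝ) :
    HasDerivAt (fun t : ℝ => x ⬝ᵥ ((M₀ + t • A)⁻¹ *ᵥ x))
      (x ⬝ᵥ ((-(M₀⁻¹ * A * M₀⁻¹)) *ᵥ x)) 0 := by
  have := (quadCLM x).hasFDerivAt.comp_hasDerivAt 0 (hasDerivAt_inv_path M₀ A hu)
  exact this

lemma logdet_deriv (M₀ A : Matrix (Fin m) (Fin m) ℝ) (hdet : M₀.det ≠ 0) :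
    HasDerivAt (fun t : ℝ => Real.log |(M₀ + t • A).det|)
      (trace (M₀⁻¹ * A)) 0 := by
  set B := M₀⁻¹ * A with hB
  set P := (Matrix.det (1 + (X : ℝ[X]) • B.map C)).divX.divX with hP
  have hexp : ∀ t : ℝ, (M₀ + t • A).det
      = M₀.det * (1 + trace B * t + P.eval t * t ^ 2) := by
    intro t
    have hfac : M₀ + t • A = M₀ * (1 + t • B) := by
      rw [Matrix.mul_add, mul_one, Matrix.mul_smul, hB, ← Matrix.mul_assoc,
        Matrix.mul_nonsing_inv _ (isUnit_iff_ne_zero.2 hdet), Matrix.one_mul]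
    rw [hfac, Matrix.det_mul, Matrix.det_one_add_smul]
  have hg : HasDerivAt (fun t : ℝ => 1 + trace B * t + P.eval t * t ^ 2) (trace B) 0 := by
    have h1 : HasDerivAt (fun t : ℝ => 1 + trace B * t) (trace B) 0 := by
      simpa using ((hasDerivAt_id (0:ℝ)).const_mul (trace B)).const_add 1
    have h2 : HasDerivAt (fun t : ℝ => P.eval t * t ^ 2) 0 0 := by
      simpa using (P.hasDerivAt 0).fun_mul (hasDerivAt_pow 2 0)
    simpa using h1.fun_add h2
  have hd : HasDerivAt (fun t : ℝ => (M₀ + t • A).det) (M₀.det * trace B) 0 := by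
    have heq : (fun t : ℝ => (M₀ + t • A).det)
        = fun t : ℝ => M₀.det * (1 + trace B * t + P.eval t * t ^ 2) := funext hexp
    rw [heq]
    exact hg.const_mul _
  have hd0 : (M₀ + (0:ℝ) • A).det ≠ 0 := by simpa using hdet
  have hlog := hd.log hd0
  have hval : M₀.det * trace B / (M₀ + (0:ℝ) • A).det = trace B := by
    field_simp
    simp [mul_comm]
  rw [hval] at hlog
  have habs : (fun t : ℝ => Real.log |(M₀ + t • A).det|)
      = fun t : ℝ => Real.log ((M₀ + t • A).det) := by
    funext t; rw [Real.log_abs]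
  rw [habs]
  exact hlog

end Aux

section AuxAlg

variable {k m : ℕ}

lemma outer_mulVec (s : Fin m → ℝ) (y : Fin m → ℝ) :
    vecMulVec s s *ᵥ y = (s ⬝ᵥ y) • s := by
  funext a
  simp only [mulVec, vecMulVec_apply, dotProduct, Pi.smul_apply, smul_eq_mul,
    Finset.sum_mul, Finset.mul_sum]
  exact Finset.sum_congr rfl fun b _ => by ring

lemma quad_outer (N : Matrix (Fin m) (Fin m) ℝ) (s x : Fin m → ℝ) :
    x ⬝ᵥ ((N * vecMulVec s s * N) *ᵥ x)
      = (x ⬝ᵥ (N *ᵥ s)) * (s ⬝ᵥ (N *ᵥ x)) := by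
  rw [← Matrix.mulVec_mulVec, ← Matrix.mulVec_mulVec, outer_mulVec,
    Matrix.mulVec_smul, dotProduct_smul]
  ring_nf

lemma entry_outer (P : Matrix (Fin k) (Fin m) ℝ) (Q : Matrix (Fin m) (Fin k) ℝ)
    (u v : Fin m → ℝ) (i : Fin k) :
    (P * vecMulVec u v * Q) i i = (P *ᵥ u) i * (v ᵥ* Q) i := by
  simp only [mul_apply, vecMulVec_apply, mulVec, vecMul, dotProduct]
  rw [Finset.sum_mul_sum]
  rw [Finset.sum_comm]
  refine Finset.sum_congr rfl fun a _ => ?_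
  rw [Finset.sum_mul]
  exact Finset.sum_congr rfl fun b _ => by ring

lemma trace_mul_outer (N : Matrix (Fin m) (Fin m) ℝ) (s : Fin m → ℝ) :
    trace (N * vecMulVec s s) = s ⬝ᵥ (N *ᵥ s) := by
  simp only [trace, diag, mul_apply, vecMulVec_apply, dotProduct, mulVec, Finset.mul_sum]
  refine Finset.sum_congr rfl fun a _ => Finset.sum_congr rfl fun b _ => by ring

lemma mulVec_left (S : Matrix (Fin m) (Fin k) ℝ) (N : Matrix (Fin m) (Fin m) ℝ)
    (y : Fin m → ℝ) (i : Fin k) :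
    ((Sᵀ * N) *ᵥ y) i = (fun a => S a i) ⬝ᵥ (N *ᵥ y) := by
  simp only [mulVec, mul_apply, transpose_apply, dotProduct, Finset.sum_mul, Finset.mul_sum]
  rw [Finset.sum_comm]
  refine Finset.sum_congr rfl fun a _ => Finset.sum_congr rfl fun b _ => by ring

lemma vecMul_right (S : Matrix (Fin m) (Fin k) ℝ) (N : Matrix (Fin m) (Fin m) ℝ)
    (y : Fin m → ℝ) (i : Fin k) :
    (y ᵥ* (N * S)) i = y ⬝ᵥ (N *ᵥ fun a => S a i) := by
  simp only [vecMul, mulVec, mul_apply, dotProduct, Finset.sum_mul, Finset.mul_sum]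

lemma entry_SNS (S : Matrix (Fin m) (Fin k) ℝ) (N : Matrix (Fin m) (Fin m) ℝ) (i : Fin k) :
    (Sᵀ * N * S) i i = (fun a => S a i) ⬝ᵥ (N *ᵥ fun a => S a i) := by
  simp only [mul_apply, transpose_apply, dotProduct, mulVec, Finset.sum_mul, Finset.mul_sum]
  rw [Finset.sum_comm]
  refine Finset.sum_congr rfl fun a _ => Finset.sum_congr rfl fun b _ => by ring

lemma diag_single_outer {n : ℕ} (S : Matrix (Fin m) (Fin n) ℝ) (i : Fin n) :
    S * Matrix.diagonal (Pi.single i (1:ℝ)) * Sᵀ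
      = vecMulVec (fun a => S a i) (fun a => S a i) := by
  ext a b
  rw [Matrix.mul_apply]
  simp only [Matrix.mul_diagonal, transpose_apply, vecMulVec_apply,
    Pi.single_apply, mul_ite, mul_one, mul_zero, ite_mul, zero_mul]
  rw [Finset.sum_ite_eq' Finset.univ i fun k => S a k * S b k]
  simp

lemma keyEq {n L : ℕ} (S : Matrix (Fin m) (Fin n) ℝ) (N : Matrix (Fin m) (Fin m) ℝ)
    (μ : Fin m → ℝ) (Y : Fin L → Fin m → ℝ) (i : Fin n) :
    ((Sᵀ * N * (1 - empCov L μ Y * N) * S : Matrix (Fin n) (Fin n) ℝ)) i i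
      = trace (N * (S * Matrix.diagonal (Pi.single i (1:ℝ)) * Sᵀ))
        - (1/(L:ℝ)) * ∑ j, (Y j - μ) ⬝ᵥ
            ((N * (S * Matrix.diagonal (Pi.single i (1:ℝ)) * Sᵀ) * N) *ᵥ (Y j - μ)) := by
  rw [diag_single_outer, trace_mul_outer]
  have houter : ∀ j, (Matrix.of fun a b => (Y j a - μ a) * (Y j b - μ b))
      = vecMulVec (Y j - μ) (Y j - μ) := by
    intro j; ext a b; simp [vecMulVec_apply]
  have expand : Sᵀ * N * (1 - empCov L μ Y * N) * S
      = Sᵀ * N * S - (1/(L:ℝ)) •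
          ∑ j, (Sᵀ * N) * (vecMulVec (Y j - μ) (Y j - μ) * (N * S)) := by
    rw [Matrix.mul_sub, Matrix.mul_one, Matrix.sub_mul, empCov]
    simp only [Matrix.smul_mul, Matrix.mul_smul, Matrix.sum_mul, Matrix.mul_sum,
      houter, Matrix.mul_assoc]
  rw [expand, Matrix.sub_apply, Matrix.smul_apply, Matrix.sum_apply, entry_SNS, smul_eq_mul]
  congr 2
  refine Finset.sum_congr rfl fun j _ => ?_
  rw [← Matrix.mul_assoc, entry_outer, quad_outer, mulVec_left, vecMul_right]
  ring

end AuxAlg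

/-- If `p₀` is a local minimum of `Φ` and `M_{p₀}` is
positive definite, then every diagonal entry of
`Sᵀ M_{p₀}⁻¹ (I − W M_{p₀}⁻¹) S` is zero. -/
theorem stmt7 {m n : ℕ} (S : Matrix (Fin m) (Fin n) ℝ)
    (Sig : Matrix (Fin m) (Fin m) ℝ) (hSig : Sig.IsSymm)
    (L : ℕ) (μ : Fin m → ℝ) (Y : Fin L → Fin m → ℝ)
    (p₀ : Fin n → ℝ) (hmin : IsLocalMin (mlObjective S Sig L μ Y) p₀)
    (hpos : (covMat S Sig p₀).PosDef) :
    ∀ i : Fin n,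
      ((Sᵀ * (covMat S Sig p₀)⁻¹ *
        (1 - empCov L μ Y * (covMat S Sig p₀)⁻¹) * S :
          Matrix (Fin n) (Fin n) ℝ)) i i = 0 := by
  intro i
  set M₀ := covMat S Sig p₀ with hM₀def
  have hdet : M₀.det ≠ 0 := hpos.det_pos.ne'
  have hu : IsUnit M₀ := (Matrix.isUnit_iff_isUnit_det _).2 (isUnit_iff_ne_zero.2 hdet)
  set A := S * Matrix.diagonal ((Pi.single i 1 : Fin n → ℝ)) * Sᵀ with hAdef
  have hcov : ∀ t : ℝ, covMat S Sig (p₀ + t • (Pi.single i 1 : Fin n → ℝ)) = M₀ + t • A := by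
    intro t
    rw [hM₀def, hAdef]
    simp only [covMat]
    have hdiag : Matrix.diagonal (p₀ + t • (Pi.single i 1 : Fin n → ℝ))
        = Matrix.diagonal p₀ + t • Matrix.diagonal (Pi.single i 1 : Fin n → ℝ) := by
      ext a b
      by_cases h : a = b <;> simp [Matrix.diagonal_apply, h]
    rw [hdiag]
    simp only [Matrix.mul_add, Matrix.add_mul, Matrix.mul_smul, Matrix.smul_mul]
    abel
  have hfun : (fun t : ℝ => mlObjective S Sig L μ Y (p₀ + t • (Pi.single i 1 : Fin n → ℝ)))
      = fun t : ℝ => (1/(L:ℝ)) * ∑ j, (Y j - μ) ⬝ᵥ ((M₀ + t • A)⁻¹ *ᵥ (Y j - μ))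
          + Real.log |(M₀ + t • A).det| := by
    funext t
    rw [mlObjective, hcov t]
  have hderiv : HasDerivAt
      (fun t : ℝ => mlObjective S Sig L μ Y (p₀ + t • (Pi.single i 1 : Fin n → ℝ)))
      ((1/(L:ℝ)) * ∑ j, (Y j - μ) ⬝ᵥ ((-(M₀⁻¹ * A * M₀⁻¹)) *ᵥ (Y j - μ))
        + trace (M₀⁻¹ * A)) 0 := by
    rw [hfun]
    exact ((HasDerivAt.fun_sum fun j _ => quad_deriv M₀ A hu (Y j - μ)).const_mul _).fun_add
      (logdet_deriv M₀ A hdet)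
  have hlocmin : IsLocalMin
      (fun t : ℝ => mlObjective S Sig L μ Y (p₀ + t • (Pi.single i 1 : Fin n → ℝ))) 0 := by
    have hc : Continuous fun t : ℝ => p₀ + t • (Pi.single i 1 : Fin n → ℝ) := by continuity
    have hg : Filter.Tendsto (fun t : ℝ => p₀ + t • (Pi.single i 1 : Fin n → ℝ))
        (nhds 0) (nhds p₀) := by
      have := hc.tendsto 0
      simpa using this
    have h0 : (fun t : ℝ => p₀ + t • (Pi.single i 1 : Fin n → ℝ)) 0 = p₀ := by simp
    have hf : IsMinFilter (mlObjective S Sig L μ Y) (nhds p₀)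
        ((fun t : ℝ => p₀ + t • (Pi.single i 1 : Fin n → ℝ)) 0) := by
      rw [h0]; exact hmin
    exact IsMinFilter.comp_tendsto
      (g := fun t : ℝ => p₀ + t • (Pi.single i 1 : Fin n → ℝ)) (b := (0:ℝ)) hf hg
  have hD := hlocmin.hasDerivAt_eq_zero hderiv
  rw [keyEq, ← hAdef]
  have hneg : ∀ j, (Y j - μ) ⬝ᵥ ((-(M₀⁻¹ * A * M₀⁻¹)) *ᵥ (Y j - μ))
      = -((Y j - μ) ⬝ᵥ ((M₀⁻¹ * A * M₀⁻¹) *ᵥ (Y j - μ))) := fun j => by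
    simp [Matrix.neg_mulVec, dotProduct_neg]
  simp only [hneg, Finset.sum_neg_distrib, mul_neg] at hD
  linarith [hD]
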